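/- Let F = {C(o_i, r_i)}_{i ∈ I} be a countable family of closed spherical caps on S^3 ⊂ E^4 with radii r_i ∈ (0, π/2), whose interiors are pairwise disjoint, and which is unconditionally symmetric (for each i and each coordinate index m, the cap with center σ_m(o_i) and radius r_i belongs to F). Suppose F contains the four caps of radius π/4 centered at (±1/√2, ±1/√2, 0, 0), and F contains no cap of radius π/4 centered at any of the points (0, 0, ±1/√2, ±1/√2). Then every cap of F is contained in {x ∈ S^3 : ε⟨x, n⟩ > 0} for some sign ε ∈ {+1, -1} and some n ∈ {(1/√2, 1/√2, 0, 0), (1/√2, -1/√2, 0, 0), e_3, e_4}, i.e., every cap of F is separated by one of these four pairwise orthogonal greatspheres. -/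

import Mathlib

open scoped RealInnerProductSpace
set_option maxHeartbeats 2000000

/-- The point `(s/√2, t/√2, 0, 0)`-style center: `(1/√2)(s eᵢ + t eⱼ)` in `E⁴`. -/
noncomputable def twoTangentCenter (i j : Fin 4) (s t : ℝ) : EuclideanSpace ℝ (Fin 4) :=
  (Real.sqrt 2)⁻¹ •
    (s • EuclideanSpace.single i (1 : ℝ) + t • EuclideanSpace.single j (1 : ℝ))

section Aux

open Real

variable {E : Type*} [NormedAddCommGroup E] [InnerProductSpace ℝ E]

lemma cap_in_halfspace {o n x : E} {r : ℝ} (ho : ‖o‖ = 1) (hn : ‖n‖ = 1) (hx : ‖x‖ = 1)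
    (hr0 : 0 < r) (hr1 : r < π / 2) (h1 : Real.cos r ≤ ⟪x, o⟫) (h2 : Real.sin r < ⟪o, n⟫) :
    0 < ⟪x, n⟫ := by
  have hsin : 0 < Real.sin r := Real.sin_pos_of_pos_of_lt_pi hr0 (by linarith [Real.pi_pos])
  have hcos : 0 < Real.cos r := Real.cos_pos_of_mem_Ioo ⟨by linarith [Real.pi_pos], hr1⟩
  have hpy : Real.sin r ^ 2 + Real.cos r ^ 2 = 1 := Real.sin_sq_add_cos_sq r
  set c1 := ⟪x, o⟫ with hc1
  set c2 := ⟪o, n⟫ with hc2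
  have hox : ⟪o, x⟫ = c1 := by rw [hc1, real_inner_comm]
  have hno : ⟪n, o⟫ = c2 := by rw [hc2, real_inner_comm]
  have hoo : ⟪o, o⟫ = (1 : ℝ) := by
    rw [real_inner_self_eq_norm_sq, ho]; norm_num
  have hkey : ⟪x, n⟫ = c1 * c2 + ⟪x - c1 • o, n - c2 • o⟫ := by
    simp only [inner_sub_left, inner_sub_right, real_inner_smul_left, real_inner_smul_right,
      hoo, hox, hno, ← hc1, ← hc2]
    ring
  set A := ‖x - c1 • o‖ with hA
  set B := ‖n - c2 • o‖ with hB
  have hA2 : A ^ 2 = 1 - c1 ^ 2 := by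
    rw [hA, norm_sub_sq_real, real_inner_smul_right, norm_smul, hx, ho, ← hc1, Real.norm_eq_abs,
      mul_one, sq_abs]
    ring
  have hB2 : B ^ 2 = 1 - c2 ^ 2 := by
    rw [hB, norm_sub_sq_real, real_inner_smul_right, norm_smul, hn, ho, hno, Real.norm_eq_abs,
      mul_one, sq_abs]
    ring
  have hAn : 0 ≤ A := norm_nonneg _
  have hBn : 0 ≤ B := norm_nonneg _
  have hib : |⟪x - c1 • o, n - c2 • o⟫| ≤ A * B := abs_real_inner_le_norm _ _
  have hAle : A ≤ Real.sin r := by nlinarith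
  have hBlt : B < Real.cos r := by nlinarith
  have h3 : A * B < Real.sin r * Real.cos r := by nlinarith
  have h4 : Real.sin r * Real.cos r < c1 * c2 := by nlinarith
  have := abs_le.mp hib
  nlinarith

lemma sin_sq_identity (A B : ℝ) :
    Real.sin A ^ 2 + Real.sin B ^ 2 + 2 * Real.sin A * Real.sin B * Real.cos (A + B)
      = Real.sin (A + B) ^ 2 := by
  rw [Real.sin_add, Real.cos_add]
  have hA := Real.sin_sq_add_cos_sq A
  have hB := Real.sin_sq_add_cos_sq B
  nlinarith [hA, hB]

lemma caps_meet {o₁ o₂ : E} {r₁ r₂ : ℝ} (h₁ : ‖o₁‖ = 1) (h₂ : ‖o₂‖ = 1)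
    (hr₁ : r₁ ∈ Set.Ioo 0 (π / 2)) (hr₂ : r₂ ∈ Set.Ioo 0 (π / 2))
    (h : Real.cos (r₁ + r₂) < ⟪o₁, o₂⟫) :
    ∃ x : E, ‖x‖ = 1 ∧ Real.cos r₁ < ⟪x, o₁⟫ ∧ Real.cos r₂ < ⟪x, o₂⟫ := by
  obtain ⟨hr₁0, hr₁1⟩ := hr₁
  obtain ⟨hr₂0, hr₂1⟩ := hr₂
  have hpi := Real.pi_pos
  have habs : |⟪o₁, o₂⟫| ≤ 1 := by
    have := abs_real_inner_le_norm o₁ o₂; rw [h₁, h₂] at this; simpa using this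
  obtain ⟨hlb, hub⟩ := abs_le.mp habs
  set θ := Real.arccos ⟪o₁, o₂⟫ with hθ
  have hcosθ : Real.cos θ = ⟪o₁, o₂⟫ := Real.cos_arccos hlb hub
  have hθ0 : 0 ≤ θ := Real.arccos_nonneg _
  have hθpi : θ ≤ π := Real.arccos_le_pi _
  have hsum : r₁ + r₂ < π := by linarith
  have hθlt : θ < r₁ + r₂ := by
    by_contra hcon
    push_neg at hcon
    have := Real.strictAntiOn_cos.le_iff_ge (by constructor <;> linarith : θ ∈ Set.Icc 0 π)
      (by constructor <;> linarith : (r₁ + r₂) ∈ Set.Icc 0 π)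
    rw [hcosθ] at this
    have h2 := this.mpr hcon
    linarith
  by_cases hc1 : θ < r₁
  · refine ⟨o₂, h₂, ?_, ?_⟩
    · rw [real_inner_comm, ← hcosθ]
      exact Real.strictAntiOn_cos (by constructor <;> linarith) (by constructor <;> linarith) hc1
    · have : ⟪o₂, o₂⟫ = (1:ℝ) := by rw [real_inner_self_eq_norm_sq, h₂]; norm_num
      rw [this]
      calc Real.cos r₂ < Real.cos 0 := Real.strictAntiOn_cos
            (by constructor <;> linarith) (by constructor <;> linarith) hr₂0
        _ = 1 := Real.cos_zero
  by_cases hc2 : θ < r₂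
  · refine ⟨o₁, h₁, ?_, ?_⟩
    · have : ⟪o₁, o₁⟫ = (1:ℝ) := by rw [real_inner_self_eq_norm_sq, h₁]; norm_num
      rw [this]
      calc Real.cos r₁ < Real.cos 0 := Real.strictAntiOn_cos
            (by constructor <;> linarith) (by constructor <;> linarith) hr₁0
        _ = 1 := Real.cos_zero
    · rw [← hcosθ]
      exact Real.strictAntiOn_cos (by constructor <;> linarith) (by constructor <;> linarith) hc2
  push_neg at hc1 hc2
  set t := (θ + r₁ - r₂) / 2 with ht
  set u := (θ + r₂ - r₁) / 2 with hu
  have htu : t + u = θ := by rw [ht, hu]; ring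
  have ht0 : 0 < t := by rw [ht]; linarith
  have htr : t < r₁ := by rw [ht]; linarith
  have hu0 : 0 < u := by rw [hu]; linarith
  have hur : u < r₂ := by rw [hu]; linarith
  have hθpos : 0 < θ := by linarith
  have hsinθ : 0 < Real.sin θ := Real.sin_pos_of_pos_of_lt_pi hθpos (by linarith)
  have hsint : 0 ≤ Real.sin t := Real.sin_nonneg_of_nonneg_of_le_pi (by linarith) (by linarith)
  have hsinu : 0 ≤ Real.sin u := Real.sin_nonneg_of_nonneg_of_le_pi (by linarith) (by linarith)
  set x : E := (Real.sin θ)⁻¹ • ((Real.sin u) • o₁ + (Real.sin t) • o₂) with hx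
  have hoo₁ : ⟪o₁, o₁⟫ = (1:ℝ) := by rw [real_inner_self_eq_norm_sq, h₁]; norm_num
  have hoo₂ : ⟪o₂, o₂⟫ = (1:ℝ) := by rw [real_inner_self_eq_norm_sq, h₂]; norm_num
  have h21 : ⟪o₂, o₁⟫ = Real.cos θ := by rw [real_inner_comm, hcosθ]
  have h12 : ⟪o₁, o₂⟫ = Real.cos θ := hcosθ.symm
  have hxo₁ : ⟪x, o₁⟫ = Real.cos t := by
    rw [hx]
    simp only [inner_add_left, real_inner_smul_left]
    rw [hoo₁, h21]
    have hsu : Real.sin u = Real.sin θ * Real.cos t - Real.cos θ * Real.sin t := by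
      have : u = θ - t := by rw [hu, ht]; ring
      rw [this, Real.sin_sub]
    rw [hsu]
    field_simp
    ring
  have hxo₂ : ⟪x, o₂⟫ = Real.cos u := by
    rw [hx]
    simp only [inner_add_left, real_inner_smul_left]
    rw [hoo₂, h12]
    have hst : Real.sin t = Real.sin θ * Real.cos u - Real.cos θ * Real.sin u := by
      have : t = θ - u := by rw [ht, hu]; ring
      rw [this, Real.sin_sub]
    rw [hst]
    field_simp
    ring
  have hxnorm : ‖x‖ = 1 := by
    have hsq : ⟪x, x⟫ = (1:ℝ) := by
      rw [hx]
      simp only [inner_add_left, inner_add_right, real_inner_smul_left, real_inner_smul_right]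
      rw [hoo₁, hoo₂, h12, h21]
      have hid := sin_sq_identity u t
      rw [show u + t = θ by linarith] at hid
      field_simp
      nlinarith [hid]
    have := real_inner_self_eq_norm_sq x
    nlinarith [norm_nonneg x, this, hsq]
  refine ⟨x, hxnorm, ?_, ?_⟩
  · rw [hxo₁]
    exact Real.strictAntiOn_cos (by constructor <;> linarith) (by constructor <;> linarith) htr
  · rw [hxo₂]
    exact Real.strictAntiOn_cos (by constructor <;> linarith) (by constructor <;> linarith) hur

lemma cap_subset_halfspace {o n : E} {r ε : ℝ} (ho : ‖o‖ = 1) (hn : ‖n‖ = 1)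
    (hr0 : 0 < r) (hr1 : r < π / 2) (hε : ε = 1 ∨ ε = -1)
    (h : Real.sin r < ε * ⟪o, n⟫) :
    {x : E | ‖x‖ = 1 ∧ Real.cos r ≤ ⟪x, o⟫} ⊆ {x : E | ‖x‖ = 1 ∧ 0 < ε * ⟪x, n⟫} := by
  rintro x ⟨hx1, hx2⟩
  refine ⟨hx1, ?_⟩
  have hεn : ‖ε • n‖ = 1 := by
    rw [norm_smul, hn, Real.norm_eq_abs]
    rcases hε with h'|h' <;> simp [h']
  have := cap_in_halfspace ho hεn hx1 hr0 hr1 hx2 (by rwa [real_inner_smul_right])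
  rwa [real_inner_smul_right] at this

lemma inner_ttc (x : EuclideanSpace ℝ (Fin 4)) (i j : Fin 4) (s t : ℝ) :
    ⟪x, twoTangentCenter i j s t⟫ = (Real.sqrt 2)⁻¹ * (s * x i + t * x j) := by
  simp [twoTangentCenter, inner_add_right, real_inner_smul_right, EuclideanSpace.inner_single_right]
  ring

lemma ttc_apply (i j : Fin 4) (s t : ℝ) (m : Fin 4) :
    twoTangentCenter i j s t m = (Real.sqrt 2)⁻¹ *
      (s * (if i = m then 1 else 0) + t * (if j = m then 1 else 0)) := by
  simp [twoTangentCenter, EuclideanSpace.single_apply, eq_comm]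
  split_ifs <;> ring

lemma norm_ttc (i j : Fin 4) (s t : ℝ) (hij : i ≠ j) (hs : s = 1 ∨ s = -1) (ht : t = 1 ∨ t = -1) :
    ‖twoTangentCenter i j s t‖ = 1 := by
  have h2 : Real.sqrt 2 * Real.sqrt 2 = 2 := Real.mul_self_sqrt (by norm_num)
  have h : ⟪twoTangentCenter i j s t, twoTangentCenter i j s t⟫ = (1:ℝ) := by
    rw [inner_ttc]
    simp [ttc_apply, hij, hij.symm]
    rcases hs with h|h <;> rcases ht with h'|h' <;> subst h <;> subst h' <;>
      field_simp <;> linarith [h2]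
  have := real_inner_self_eq_norm_sq (twoTangentCenter i j s t)
  nlinarith [norm_nonneg (twoTangentCenter i j s t)]

lemma inner_euclid4 (x y : EuclideanSpace ℝ (Fin 4)) :
    ⟪x, y⟫ = x 0 * y 0 + x 1 * y 1 + x 2 * y 2 + x 3 * y 3 := by
  rw [PiLp.inner_apply, Fin.sum_univ_four]
  simp [RCLike.inner_apply]
  ring

lemma cos_add_pi_div_four (r : ℝ) :
    Real.cos (r + Real.pi / 4) = (Real.sqrt 2)⁻¹ * (Real.cos r - Real.sin r) := by
  rw [Real.cos_add, Real.cos_pi_div_four, Real.sin_pi_div_four]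
  have h2 : Real.sqrt 2 * Real.sqrt 2 = 2 := Real.mul_self_sqrt (by norm_num)
  have h0 : (0:ℝ) < Real.sqrt 2 := Real.sqrt_pos.mpr (by norm_num)
  field_simp
  linear_combination (Real.cos r - Real.sin r) * h2

end Aux

/-- Let `F` be a countable unconditionally symmetric packing of closed
spherical caps on `S³ ⊂ E⁴` containing the four caps of radius `π/4` centered at
`(±1/√2, ±1/√2, 0, 0)` and containing no cap of radius `π/4` centered at
`(0, 0, ±1/√2, ±1/√2)`. Then every cap of `F` is separated by one of the four pairwise
orthogonal greatspheres with normals `(1/√2, 1/√2, 0, 0)`, `(1/√2, -1/√2, 0, 0)`, `e₃`, `e₄`. -/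
theorem four_twoTangent_caps_family_separated
    (I : Type) [Countable I]
    (o : I → EuclideanSpace ℝ (Fin 4)) (r : I → ℝ)
    (ho : ∀ i, ‖o i‖ = 1) (hr : ∀ i, r i ∈ Set.Ioo 0 (Real.pi / 2))
    (hpack : ∀ i j, i ≠ j → Disjoint
      {x : EuclideanSpace ℝ (Fin 4) | ‖x‖ = 1 ∧ Real.cos (r i) < ⟪x, o i⟫}
      {x : EuclideanSpace ℝ (Fin 4) | ‖x‖ = 1 ∧ Real.cos (r j) < ⟪x, o j⟫})
    (hsym : ∀ i, ∀ m : Fin 4, ∃ j,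
      o j = o i - (2 * o i m) • EuclideanSpace.single m (1 : ℝ) ∧ r j = r i)
    (hmem : ∀ s t : ℝ, (s = 1 ∨ s = -1) → (t = 1 ∨ t = -1) →
      ∃ i, o i = twoTangentCenter 0 1 s t ∧ r i = Real.pi / 4)
    (hnot : ∀ s t : ℝ, (s = 1 ∨ s = -1) → (t = 1 ∨ t = -1) →
      ¬ ∃ i, o i = twoTangentCenter 2 3 s t ∧ r i = Real.pi / 4) :
    ∀ i, ∃ n ∈ ({twoTangentCenter 0 1 1 1, twoTangentCenter 0 1 1 (-1),
        EuclideanSpace.single 2 (1 : ℝ), EuclideanSpace.single 3 (1 : ℝ)} :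
        Set (EuclideanSpace ℝ (Fin 4))), ∃ ε : ℝ, (ε = 1 ∨ ε = -1) ∧
      {x : EuclideanSpace ℝ (Fin 4) | ‖x‖ = 1 ∧ Real.cos (r i) ≤ ⟪x, o i⟫} ⊆
        {x : EuclideanSpace ℝ (Fin 4) | ‖x‖ = 1 ∧ 0 < ε * ⟪x, n⟫} := by
  intro i
  obtain ⟨hr0, hr1⟩ := hr i
  have hpi := Real.pi_pos
  have hsin : 0 < Real.sin (r i) := Real.sin_pos_of_pos_of_lt_pi hr0 (by linarith)
  have hcos : 0 < Real.cos (r i) := Real.cos_pos_of_mem_Ioo ⟨by linarith, hr1⟩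
  have hs2 : Real.sqrt 2 * Real.sqrt 2 = 2 := Real.mul_self_sqrt (by norm_num)
  have hs2pos : (0:ℝ) < Real.sqrt 2 := Real.sqrt_pos.mpr (by norm_num)
  set a := o i 0 with hadef
  set b := o i 1 with hbdef
  set c := o i 2 with hcdef
  set d := o i 3 with hddef
  by_cases hAB : Real.sqrt 2 * Real.sin (r i) < |a + b|
  · refine ⟨twoTangentCenter 0 1 1 1, Set.mem_insert _ _,
      if 0 ≤ a + b then 1 else -1, by split <;> simp, ?_⟩
    apply cap_subset_halfspace (ho i) (norm_ttc 0 1 1 1 (by decide) (Or.inl rfl) (Or.inl rfl))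
      hr0 hr1 (by split <;> simp)
    rw [inner_ttc]
    have key : Real.sin (r i) < (Real.sqrt 2)⁻¹ * |a + b| := by
      calc Real.sin (r i) = (Real.sqrt 2)⁻¹ * (Real.sqrt 2 * Real.sin (r i)) := by
            field_simp
        _ < (Real.sqrt 2)⁻¹ * |a + b| := by
            exact mul_lt_mul_of_pos_left hAB (by positivity)
    split_ifs with hsgn
    · rw [abs_of_nonneg hsgn] at key; rw [← hadef, ← hbdef]; nlinarith
    · rw [abs_of_neg (lt_of_not_ge hsgn)] at key; rw [← hadef, ← hbdef]; nlinarith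
  by_cases hAB2 : Real.sqrt 2 * Real.sin (r i) < |a - b|
  · refine ⟨twoTangentCenter 0 1 1 (-1), Set.mem_insert_of_mem _ (Set.mem_insert _ _),
      if 0 ≤ a - b then 1 else -1, by split <;> simp, ?_⟩
    apply cap_subset_halfspace (ho i) (norm_ttc 0 1 1 (-1) (by decide) (Or.inl rfl) (Or.inr rfl))
      hr0 hr1 (by split <;> simp)
    rw [inner_ttc]
    have key : Real.sin (r i) < (Real.sqrt 2)⁻¹ * |a - b| := by
      calc Real.sin (r i) = (Real.sqrt 2)⁻¹ * (Real.sqrt 2 * Real.sin (r i)) := by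
            field_simp
        _ < (Real.sqrt 2)⁻¹ * |a - b| := by
            exact mul_lt_mul_of_pos_left hAB2 (by positivity)
    split_ifs with hsgn
    · rw [abs_of_nonneg hsgn] at key; rw [← hadef, ← hbdef]; nlinarith
    · rw [abs_of_neg (lt_of_not_ge hsgn)] at key; rw [← hadef, ← hbdef]; nlinarith
  by_cases hC : Real.sin (r i) < |c|
  · refine ⟨EuclideanSpace.single 2 (1:ℝ),
      Set.mem_insert_of_mem _ (Set.mem_insert_of_mem _ (Set.mem_insert _ _)),
      if 0 ≤ c then 1 else -1, by split <;> simp, ?_⟩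
    apply cap_subset_halfspace (ho i) (by simp [EuclideanSpace.norm_single]) hr0 hr1
      (by split <;> simp)
    rw [EuclideanSpace.inner_single_right]
    simp only [map_one, RCLike.star_def, starRingEnd_apply, star_trivial]
    split_ifs with hsgn
    · rw [abs_of_nonneg hsgn] at hC; rw [← hcdef]; nlinarith
    · rw [abs_of_neg (lt_of_not_ge hsgn)] at hC; rw [← hcdef]; nlinarith
  by_cases hD : Real.sin (r i) < |d|
  · refine ⟨EuclideanSpace.single 3 (1:ℝ),
      Set.mem_insert_of_mem _ (Set.mem_insert_of_mem _ (Set.mem_insert_of_mem _ rfl)),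
      if 0 ≤ d then 1 else -1, by split <;> simp, ?_⟩
    apply cap_subset_halfspace (ho i) (by simp [EuclideanSpace.norm_single]) hr0 hr1
      (by split <;> simp)
    rw [EuclideanSpace.inner_single_right]
    simp only [map_one, RCLike.star_def, starRingEnd_apply, star_trivial]
    split_ifs with hsgn
    · rw [abs_of_nonneg hsgn] at hD; rw [← hddef]; nlinarith
    · rw [abs_of_neg (lt_of_not_ge hsgn)] at hD; rw [← hddef]; nlinarith
  -- contradiction branch
  exfalso
  push_neg at hAB hAB2 hC hD
  have hsumsq : a ^ 2 + b ^ 2 + c ^ 2 + d ^ 2 = 1 := by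
    have h1 : ⟪o i, o i⟫ = (1:ℝ) := by rw [real_inner_self_eq_norm_sq, ho i]; norm_num
    rw [inner_euclid4] at h1
    rw [← hadef, ← hbdef, ← hcdef, ← hddef] at h1
    nlinarith [h1]
  set s : ℝ := if 0 ≤ a then 1 else -1 with hsdef
  set t : ℝ := if 0 ≤ b then 1 else -1 with htdef
  have hs : s = 1 ∨ s = -1 := by rw [hsdef]; split <;> simp
  have ht : t = 1 ∨ t = -1 := by rw [htdef]; split <;> simp
  have hsa : s * a = |a| := by
    rw [hsdef]; split_ifs with h
    · rw [abs_of_nonneg h]; ring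
    · rw [abs_of_neg (lt_of_not_ge h)]; ring
  have htb : t * b = |b| := by
    rw [htdef]; split_ifs with h
    · rw [abs_of_nonneg h]; ring
    · rw [abs_of_neg (lt_of_not_ge h)]; ring
  obtain ⟨j, hj1, hj2⟩ := hmem s t hs ht
  by_cases hij : i = j
  · -- the cap is one of the four; but then |a+b| or |a-b| is √2 > √2 sin(π/4) = 1
    rw [← hij] at hj1 hj2
    have ha' : a = (Real.sqrt 2)⁻¹ * s := by
      rw [hadef, hj1, ttc_apply]; norm_num
    have hb' : b = (Real.sqrt 2)⁻¹ * t := by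
      rw [hbdef, hj1, ttc_apply]; norm_num
    have hsineq : Real.sin (r i) = Real.sqrt 2 / 2 := by
      rw [hj2, Real.sin_pi_div_four]
    rw [hsineq] at hAB hAB2
    have h1 : Real.sqrt 2 * (Real.sqrt 2 / 2) = 1 := by nlinarith
    rw [h1] at hAB hAB2
    have hinv : (Real.sqrt 2)⁻¹ * 2 = Real.sqrt 2 := by
      field_simp
      linarith [hs2]
    rcases hs with h'|h' <;> rcases ht with h''|h'' <;> simp only [h'] at ha' <;> simp only [h''] at hb'
    · have : a + b = Real.sqrt 2 := by rw [ha', hb']; linarith [hinv]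
      have h2 := le_abs_self (a + b)
      nlinarith
    · have : a - b = Real.sqrt 2 := by rw [ha', hb']; linarith [hinv]
      have h2 := le_abs_self (a - b)
      nlinarith
    · have : a - b = -Real.sqrt 2 := by rw [ha', hb']; linarith [hinv]
      have h2 := neg_abs_le (a - b)
      nlinarith
    · have : a + b = -Real.sqrt 2 := by rw [ha', hb']; linarith [hinv]
      have h2 := neg_abs_le (a + b)
      nlinarith
  · -- disjointness gives |a| + |b| ≤ cos r - sin r
    have hineq : ⟪o i, o j⟫ ≤ Real.cos (r i + r j) := by
      by_contra hcon
      push_neg at hcon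
      obtain ⟨x, hx1, hx2, hx3⟩ := caps_meet (ho i) (ho j) ⟨hr0, hr1⟩ (hr j) hcon
      exact Set.disjoint_left.mp (hpack i j hij) ⟨hx1, hx2⟩ ⟨hx1, hx3⟩
    rw [hj1, hj2, inner_ttc, cos_add_pi_div_four] at hineq
    rw [← hadef, ← hbdef] at hineq
    have habs : |a| + |b| ≤ Real.cos (r i) - Real.sin (r i) := by
      have h0 : (0:ℝ) < (Real.sqrt 2)⁻¹ := by positivity
      have habs' : s * a + t * b ≤ Real.cos (r i) - Real.sin (r i) :=
        le_of_mul_le_mul_left hineq h0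
      rw [hsa, htb] at habs'
      exact habs'
    have hcs : Real.sin (r i) ≤ Real.cos (r i) := by
      have := abs_nonneg a; have := abs_nonneg b; linarith
    have h2c : c ^ 2 ≤ Real.sin (r i) ^ 2 := by
      have := mul_self_le_mul_self (abs_nonneg c) hC
      nlinarith [sq_abs c]
    have h2d : d ^ 2 ≤ Real.sin (r i) ^ 2 := by
      have := mul_self_le_mul_self (abs_nonneg d) hD
      nlinarith [sq_abs d]
    have h1ab : a ^ 2 + b ^ 2 ≤ (Real.cos (r i) - Real.sin (r i)) ^ 2 := by
      have hmm : (|a| + |b|) * (|a| + |b|) ≤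
          (Real.cos (r i) - Real.sin (r i)) * (Real.cos (r i) - Real.sin (r i)) :=
        mul_self_le_mul_self (by positivity) habs
      nlinarith [sq_abs a, sq_abs b, mul_nonneg (abs_nonneg a) (abs_nonneg b)]
    have hsc : Real.cos (r i) ≤ Real.sin (r i) := by
      have hkey : Real.sin (r i) * Real.cos (r i) ≤ Real.sin (r i) * Real.sin (r i) := by
        nlinarith [Real.sin_sq_add_cos_sq (r i)]
      exact le_of_mul_le_mul_left hkey hsin
    have heq : Real.sin (r i) = Real.cos (r i) := le_antisymm hcs hsc
    have ha0 : a = 0 := by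
      have h1 : |a| = 0 := by have := abs_nonneg a; have := abs_nonneg b; linarith
      exact abs_eq_zero.mp h1
    have hb0 : b = 0 := by
      have h1 : |b| = 0 := by have := abs_nonneg a; have := abs_nonneg b; linarith
      exact abs_eq_zero.mp h1
    have hr4 : r i = Real.pi / 4 := by
      have h1 : Real.sin (r i) = Real.sin (Real.pi / 2 - r i) := by
        rw [Real.sin_pi_div_two_sub, heq]
      have h2 := Real.injOn_sin (by constructor <;> linarith : r i ∈ Set.Icc (-(Real.pi/2)) (Real.pi/2))
        (by constructor <;> linarith : Real.pi / 2 - r i ∈ Set.Icc (-(Real.pi/2)) (Real.pi/2)) h1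
      linarith
    have hsinhalf : Real.sin (r i) ^ 2 = 1 / 2 := by
      have := Real.sin_sq_add_cos_sq (r i)
      nlinarith [heq]
    have hcd : c ^ 2 = 1 / 2 ∧ d ^ 2 = 1 / 2 := by
      have haz : a ^ 2 = 0 := by rw [ha0]; ring
      have hbz : b ^ 2 = 0 := by rw [hb0]; ring
      constructor <;> linarith [h2c, h2d, hsinhalf, hsumsq, haz, hbz]
    have habsc : |c| = (Real.sqrt 2)⁻¹ := by
      rw [← Real.sqrt_sq_eq_abs, hcd.1, show (1/2 : ℝ) = 2⁻¹ by norm_num, Real.sqrt_inv]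
    have habsd : |d| = (Real.sqrt 2)⁻¹ := by
      rw [← Real.sqrt_sq_eq_abs, hcd.2, show (1/2 : ℝ) = 2⁻¹ by norm_num, Real.sqrt_inv]
    set s' : ℝ := if 0 ≤ c then 1 else -1 with hs'def
    set t' : ℝ := if 0 ≤ d then 1 else -1 with ht'def
    have hs' : s' = 1 ∨ s' = -1 := by rw [hs'def]; split <;> simp
    have ht' : t' = 1 ∨ t' = -1 := by rw [ht'def]; split <;> simp
    have hc' : c = (Real.sqrt 2)⁻¹ * s' := by
      rw [hs'def]; split_ifs with h
      · rw [← abs_of_nonneg h, habsc]; ring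
      · rw [show c = -|c| by rw [abs_of_neg (lt_of_not_ge h)]; ring, habsc]; ring
    have hd' : d = (Real.sqrt 2)⁻¹ * t' := by
      rw [ht'def]; split_ifs with h
      · rw [← abs_of_nonneg h, habsd]; ring
      · rw [show d = -|d| by rw [abs_of_neg (lt_of_not_ge h)]; ring, habsd]; ring
    apply hnot s' t' hs' ht'
    refine ⟨i, ?_, hr4⟩
    ext m
    rw [ttc_apply]
    fin_cases m
    · show o i 0 = _
      rw [show o i 0 = a from hadef.symm, ha0, if_neg (by decide), if_neg (by decide)]; ring
    · show o i 1 = _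
      rw [show o i 1 = b from hbdef.symm, hb0, if_neg (by decide), if_neg (by decide)]; ring
    · show o i 2 = _
      rw [show o i 2 = c from hcdef.symm, hc', if_pos (by decide), if_neg (by decide)]; ring
    · show o i 3 = _
      rw [show o i 3 = d from hddef.symm, hd', if_neg (by decide), if_pos (by decide)]; ring
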